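/- Let n_1 ≥ ... ≥ n_r and m_1 ≥ ... ≥ m_t be two partitions with conjugate parts n'_s = #{p : n_p ≥ s} and m'_s = #{q : m_q ≥ s}. Then Σ_{p=1}^{r} Σ_{q=1}^{t} min(n_p, 2·m_q) = Σ_{s ≥ 1} m'_s · ( n'_{2s-1} + n'_{2s} ). -/

import Mathlib

lemma lemA (a N : ℕ) : ∑ k ∈ Finset.Icc 1 N, (if k ≤ a then 1 else 0) = min a N := by
  induction N with
  | zero => simp
  | succ N ih =>
    rw [Finset.sum_Icc_succ_top (by omega), ih]
    split <;> omega

lemma lemB (f : ℕ → ℕ) (b : ℕ) :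
    ∑ s ∈ Finset.Icc 1 b, (f (2*s-1) + f (2*s)) = ∑ k ∈ Finset.Icc 1 (2*b), f k := by
  induction b with
  | zero => simp
  | succ b ih =>
    rw [Finset.sum_Icc_succ_top (by omega), ih]
    have h2 : 2*(b+1) = (2*b+1)+1 := by ring
    rw [h2, Finset.sum_Icc_succ_top (by omega), Finset.sum_Icc_succ_top (by omega)]
    have e1 : 2*b+1+1-1 = 2*b+1 := by omega
    rw [e1]; omega

lemma lemC (a b M : ℕ) (h : b ≤ M) :
    min a (2*b) = ∑ s ∈ Finset.Icc 1 M,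
      (if s ≤ b then ((if 2*s-1 ≤ a then 1 else 0) + (if 2*s ≤ a then 1 else 0)) else 0) := by
  rw [← Finset.sum_subset (Finset.Icc_subset_Icc_right h)
      (fun x hx hx2 => by
        rw [if_neg]
        simp only [Finset.mem_Icc] at hx hx2
        omega)]
  rw [Finset.sum_congr rfl (fun s hs => by
        rw [if_pos]
        simp only [Finset.mem_Icc] at hs
        exact hs.2)]
  rw [lemB (fun k => if k ≤ a then 1 else 0) b, lemA]

/-- For two partitions `n_1 ≥ … ≥ n_r` and `m_1 ≥ … ≥ m_t` with conjugate parts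
`n'_s = #{p : n_p ≥ s}` and `m'_s = #{q : m_q ≥ s}`, we have
`Σ_p Σ_q min(n_p, 2 m_q) = Σ_{s≥1} m'_s (n'_{2s-1} + n'_{2s})`. -/
theorem statement2 (r t : ℕ) (n : Fin r → ℕ) (m : Fin t → ℕ)
    (hnpos : ∀ p, 0 < n p) (hmpos : ∀ q, 0 < m q)
    (hndec : ∀ p q : Fin r, p ≤ q → n q ≤ n p)
    (hmdec : ∀ p q : Fin t, p ≤ q → m q ≤ m p) :
    ∑ p : Fin r, ∑ q : Fin t, min (n p) (2 * m q) =
      ∑ s ∈ Finset.Icc 1 (Finset.univ.sup m),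
        ((Finset.univ.filter fun q : Fin t => s ≤ m q).card) *
          (((Finset.univ.filter fun p : Fin r => 2 * s - 1 ≤ n p).card) +
            ((Finset.univ.filter fun p : Fin r => 2 * s ≤ n p).card)) := by
  set M := Finset.univ.sup m with hM
  have step1 : ∀ (p : Fin r) (q : Fin t), min (n p) (2 * m q) =
      ∑ s ∈ Finset.Icc 1 M,
        (if s ≤ m q then ((if 2*s-1 ≤ n p then 1 else 0) + (if 2*s ≤ n p then 1 else 0)) else 0) :=
    fun p q => lemC (n p) (m q) M (Finset.le_sup (Finset.mem_univ q))
  simp only [step1]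
  rw [Finset.sum_comm]
  rw [Finset.sum_congr rfl (fun q _ => Finset.sum_comm)]
  rw [Finset.sum_comm]
  refine Finset.sum_congr rfl (fun s _ => ?_)
  have inner : ∀ q : Fin t,
      (∑ p : Fin r, if s ≤ m q then ((if 2*s-1 ≤ n p then 1 else 0) + (if 2*s ≤ n p then 1 else 0)) else 0)
      = if s ≤ m q then
          (((Finset.univ.filter fun p : Fin r => 2 * s - 1 ≤ n p).card) +
            ((Finset.univ.filter fun p : Fin r => 2 * s ≤ n p).card)) else 0 := by
    intro q
    split
    · rw [Finset.sum_add_distrib, Finset.card_filter, Finset.card_filter]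
    · simp
  simp only [inner]
  rw [Finset.sum_ite, Finset.sum_const, Finset.sum_const_zero, add_zero, smul_eq_mul]
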